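/- Let (C^j, P_j) be a cochain complex of finite-dimensional complex inner product spaces with Laplacians Δ_j, and T = (T_j) an endomorphism of the complex commuting with each Δ_j. Then for every t > 0, the Lefschetz number satisfies L(T) = Σ_{j=0}^N (−1)^j tr(T_j ∘ exp(−t Δ_j)). (McKean–Singer / Bott alternating sum identity in the finite-dimensional setting.) -/

import Mathlib

set_option maxHeartbeats 1000000

open NormedSpace

section TraceAdd

variable {V : Type*} [AddCommGroup V] [Module ℂ V] [FiniteDimensional ℂ V]

/-- Trace additivity for an invariant submodule: trace = trace on the submodule plus trace on
the quotient. -/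
lemma trace_restrict_add_trace_mapQ (W : Submodule ℂ V) (f : V →ₗ[ℂ] V)
    (hf : W ≤ W.comap f) :
    LinearMap.trace ℂ V f
      = LinearMap.trace ℂ W (f.restrict (fun x hx => hf hx))
        + LinearMap.trace ℂ (V ⧸ W) (W.mapQ W f hf) := by
  obtain ⟨U, hU⟩ := Submodule.exists_isCompl W
  set pW : V →ₗ[ℂ] W := W.linearProjOfIsCompl U hU with hpW
  set pU : V →ₗ[ℂ] U := U.linearProjOfIsCompl W hU.symm with hpU
  have hsplit : f = (f ∘ₗ W.subtype) ∘ₗ pW + (f ∘ₗ U.subtype) ∘ₗ pU := by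
    ext x
    simp only [LinearMap.add_apply, LinearMap.comp_apply, Submodule.subtype_apply]
    rw [← map_add]
    rw [show ((pW x : V) + (pU x : V)) = x from Submodule.projection_add_projection_eq_self hU x]
  have h1 : LinearMap.trace ℂ V ((f ∘ₗ W.subtype) ∘ₗ pW)
      = LinearMap.trace ℂ W (f.restrict (fun x hx => hf hx)) := by
    rw [LinearMap.trace_comp_comm' pW (f ∘ₗ W.subtype)]
    congr 1
    ext x
    simp only [LinearMap.comp_apply, Submodule.subtype_apply, LinearMap.restrict_apply]
    exact congrArg Subtype.val
      (Submodule.linearProjOfIsCompl_apply_left hU ⟨f x, hf x.property⟩)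
  have h2 : LinearMap.trace ℂ V ((f ∘ₗ U.subtype) ∘ₗ pU)
      = LinearMap.trace ℂ (V ⧸ W) (W.mapQ W f hf) := by
    rw [LinearMap.trace_comp_comm' pU (f ∘ₗ U.subtype)]
    set e : U ≃ₗ[ℂ] (V ⧸ W) := (Submodule.quotientEquivOfIsCompl W U hU).symm with he'
    have he : ∀ u : U, e u = Submodule.Quotient.mk (u : V) := fun u => rfl
    have key : W.mapQ W f hf = e.conj (pU ∘ₗ (f ∘ₗ U.subtype)) := by
      apply LinearMap.ext
      intro x
      obtain ⟨u, rfl⟩ := e.surjective x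
      rw [LinearEquiv.conj_apply]
      simp only [LinearMap.comp_apply, LinearEquiv.coe_coe, LinearEquiv.symm_apply_apply]
      rw [he, he, Submodule.mapQ_apply]
      rw [Submodule.Quotient.eq]
      have hadd : (pW (f (u : V)) : V) + (pU (f (u : V)) : V) = f (u : V) :=
        Submodule.projection_add_projection_eq_self hU (f (u : V))
      have hkey : (pW (f (u : V)) : V) = f (u : V) - (pU (f (u : V)) : V) :=
        eq_sub_iff_add_eq.mpr hadd
      rw [Submodule.subtype_apply, ← hkey]
      exact (pW (f (u : V))).property
    rw [key, LinearMap.trace_conj']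
  calc LinearMap.trace ℂ V f
      = LinearMap.trace ℂ V ((f ∘ₗ W.subtype) ∘ₗ pW)
        + LinearMap.trace ℂ V ((f ∘ₗ U.subtype) ∘ₗ pU) := by
        rw [← map_add]; exact congrArg _ hsplit
    _ = _ := by rw [h1, h2]

end TraceAdd

/-- Traces agree when endomorphisms are intertwined by a linear equivalence. -/
lemma trace_eq_of_equiv {M N : Type*} [AddCommGroup M] [Module ℂ M]
    [AddCommGroup N] [Module ℂ N] (e : M ≃ₗ[ℂ] N)
    (f : M →ₗ[ℂ] M) (g : N →ₗ[ℂ] N) (h : ∀ x : M, g (e x) = e (f x)) :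
    LinearMap.trace ℂ M f = LinearMap.trace ℂ N g := by
  have : g = e.conj f := by
    apply LinearMap.ext
    intro x
    obtain ⟨y, rfl⟩ := e.surjective x
    rw [LinearEquiv.conj_apply]
    simp only [LinearMap.comp_apply, LinearEquiv.coe_coe, LinearEquiv.symm_apply_apply]
    exact h y
  rw [this, LinearMap.trace_conj']

section Exp

variable {V W : Type*} [NormedAddCommGroup V] [NormedSpace ℂ V] [CompleteSpace V]
  [NormedAddCommGroup W] [NormedSpace ℂ W] [CompleteSpace W]

/-- An intertwiner of operators intertwines their exponentials. -/
lemma exp_intertwine (g : V →L[ℂ] W) (a : V →L[ℂ] V) (b : W →L[ℂ] W)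
    (h : g.comp a = b.comp g) :
    g.comp (exp a) = (exp b).comp g := by
  have hpow : ∀ n : ℕ, g.comp (a ^ n) = (b ^ n).comp g := by
    intro n
    induction n with
    | zero => simp [ContinuousLinearMap.one_def]
    | succ n ih =>
        rw [pow_succ, pow_succ]
        calc g.comp ((a ^ n).comp a) = (g.comp (a ^ n)).comp a := by rfl
          _ = ((b ^ n).comp g).comp a := by rw [ih]
          _ = (b ^ n).comp (g.comp a) := by rfl
          _ = (b ^ n).comp (b.comp g) := by rw [h]
          _ = ((b ^ n).comp b).comp g := by rfl
  have hsa := NormedSpace.expSeries_summable' (𝕂 := ℂ) a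
  have hsb := NormedSpace.expSeries_summable' (𝕂 := ℂ) b
  have L : (V →L[ℂ] V) →L[ℂ] (V →L[ℂ] W) := ContinuousLinearMap.compL ℂ V V W g
  calc g.comp (exp a)
      = (ContinuousLinearMap.compL ℂ V V W g) (∑' n : ℕ, ((n.factorial : ℂ))⁻¹ • a ^ n) := by
        simp only [NormedSpace.exp_eq_tsum (𝕂 := ℂ), ContinuousLinearMap.compL_apply]
    _ = ∑' n : ℕ, ((n.factorial : ℂ))⁻¹ • g.comp (a ^ n) := by
        rw [ContinuousLinearMap.map_tsum _ hsa]
        simp [ContinuousLinearMap.compL_apply]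
    _ = ∑' n : ℕ, ((n.factorial : ℂ))⁻¹ • (b ^ n).comp g := by
        simp only [hpow]
    _ = ((ContinuousLinearMap.compL ℂ V W W).flip g) (∑' n : ℕ, ((n.factorial : ℂ))⁻¹ • b ^ n) := by
        rw [ContinuousLinearMap.map_tsum _ hsb]
        simp [ContinuousLinearMap.compL_apply]
    _ = (exp b).comp g := by
        simp only [NormedSpace.exp_eq_tsum (𝕂 := ℂ), ContinuousLinearMap.flip_apply,
          ContinuousLinearMap.compL_apply]

/-- Pointwise expansion of the exponential. -/
lemma exp_apply_eq_tsum (a : V →L[ℂ] V) (x : V) :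
    exp a x = ∑' n : ℕ, ((n.factorial : ℂ))⁻¹ • (a ^ n) x := by
  have hsa := NormedSpace.expSeries_summable' (𝕂 := ℂ) a
  calc exp a x
      = (ContinuousLinearMap.apply ℂ V x) (∑' n : ℕ, ((n.factorial : ℂ))⁻¹ • a ^ n) := by
        simp only [NormedSpace.exp_eq_tsum (𝕂 := ℂ), ContinuousLinearMap.apply_apply]
    _ = ∑' n : ℕ, ((n.factorial : ℂ))⁻¹ • (a ^ n) x := by
        rw [ContinuousLinearMap.map_tsum _ hsa]
        simp

lemma summable_exp_apply (a : V →L[ℂ] V) (x : V) :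
    Summable (fun n : ℕ => ((n.factorial : ℂ))⁻¹ • (a ^ n) x) := by
  have hsa := NormedSpace.expSeries_summable' (𝕂 := ℂ) a
  have := hsa.map (ContinuousLinearMap.apply ℂ V x) (ContinuousLinearMap.apply ℂ V x).continuous
  exact this

end Exp

/-- A sum of elements of a submodule of a finite-dimensional space lies in the submodule. -/
lemma tsum_mem_of_forall_mem {V : Type*} [NormedAddCommGroup V] [NormedSpace ℂ V]
    [FiniteDimensional ℂ V] (Wsub : Submodule ℂ V) {f : ℕ → V}
    (hs : Summable f) (h : ∀ n, f n ∈ Wsub) : ∑' n, f n ∈ Wsub := by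
  have hcl : IsClosed (Wsub : Set V) := Submodule.closed_of_finiteDimensional Wsub
  exact hcl.mem_of_tendsto hs.hasSum.tendsto_sum_nat
    (Filter.Eventually.of_forall fun n => Wsub.sum_mem fun i _ => h i)

section ExpInv

variable {V : Type*} [NormedAddCommGroup V] [NormedSpace ℂ V] [FiniteDimensional ℂ V]

/-- The exponential preserves invariant submodules. -/
lemma exp_mem_of_invariant (a : V →L[ℂ] V) (Wsub : Submodule ℂ V)
    (hW : ∀ x ∈ Wsub, a x ∈ Wsub) {x : V} (hx : x ∈ Wsub) : exp a x ∈ Wsub := by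
  rw [exp_apply_eq_tsum]
  refine tsum_mem_of_forall_mem Wsub (summable_exp_apply a x) fun n => ?_
  refine Wsub.smul_mem _ ?_
  induction n with
  | zero => simpa using hx
  | succ n ih => rw [pow_succ', ContinuousLinearMap.mul_apply]; exact hW _ ih

/-- If `a x ∈ W` and `a` preserves `W`, then `exp a x - x ∈ W`. -/
lemma exp_sub_self_mem (a : V →L[ℂ] V) (Wsub : Submodule ℂ V)
    (hW : ∀ y ∈ Wsub, a y ∈ Wsub) {x : V} (hx : a x ∈ Wsub) :
    exp a x - x ∈ Wsub := by
  have hsum := summable_exp_apply a x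
  have h0 : exp a x = x + ∑' n : ℕ, ((n + 1).factorial : ℂ)⁻¹ • (a ^ (n + 1)) x := by
    rw [exp_apply_eq_tsum, hsum.tsum_eq_zero_add]
    simp
  rw [h0]
  have : x + (∑' n : ℕ, ((n + 1).factorial : ℂ)⁻¹ • (a ^ (n + 1)) x) - x
      = ∑' n : ℕ, ((n + 1).factorial : ℂ)⁻¹ • (a ^ (n + 1)) x := by abel
  rw [this]
  refine tsum_mem_of_forall_mem Wsub ?_ fun n => ?_
  · exact (summable_nat_add_iff 1).mpr hsum
  · refine Wsub.smul_mem _ ?_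
    induction n with
    | zero => simpa using hx
    | succ n ih => rw [pow_succ', ContinuousLinearMap.mul_apply]; exact hW _ ih

end ExpInv

section Hopf

variable {V W : Type*} [AddCommGroup V] [Module ℂ V] [FiniteDimensional ℂ V]
  [AddCommGroup W] [Module ℂ W] [FiniteDimensional ℂ W]

/-- One step of the Hopf trace formula: the trace of a chain endomorphism on one degree
decomposes as (trace on boundaries) + (trace on cohomology) + (trace on next boundaries). -/
lemma hopf_step (q : V →ₗ[ℂ] W) (K : Submodule ℂ V) (hKq : K = LinearMap.ker q)
    (Rv : Submodule ℂ V) (hRK : Rv ≤ K)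
    (Rw : Submodule ℂ W) (hRw : Rw = LinearMap.range q)
    (f : V →ₗ[ℂ] V) (g : W →ₗ[ℂ] W)
    (hqf : ∀ x, q (f x) = g (q x))
    (hfR : ∀ x ∈ Rv, f x ∈ Rv) (hgR : ∀ y ∈ Rw, g y ∈ Rw)
    (hfK : ∀ x ∈ K, f x ∈ K)
    (τ : (K ⧸ Rv.comap K.subtype) →ₗ[ℂ] (K ⧸ Rv.comap K.subtype))
    (hτ : ∀ x : K, τ (Submodule.Quotient.mk x)
        = Submodule.Quotient.mk ⟨f x.1, hfK x.1 x.2⟩) :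
    LinearMap.trace ℂ V f
      = LinearMap.trace ℂ Rv (f.restrict hfR) + LinearMap.trace ℂ _ τ
        + LinearMap.trace ℂ Rw (g.restrict hgR) := by
  have hfK' : K ≤ K.comap f := fun x hx => hfK x hx
  have t1 := trace_restrict_add_trace_mapQ K f hfK'
  -- the quotient V ⧸ K is equivariantly isomorphic to Rw
  have t2 : LinearMap.trace ℂ (V ⧸ K) (K.mapQ K f hfK')
      = LinearMap.trace ℂ Rw (g.restrict hgR) := by
    let e : (V ⧸ K) ≃ₗ[ℂ] Rw :=
      ((Submodule.quotEquivOfEq K (LinearMap.ker q) hKq).trans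
        q.quotKerEquivRange).trans (LinearEquiv.ofEq _ _ hRw.symm)
    refine trace_eq_of_equiv e _ _ ?_
    intro x
    obtain ⟨x, rfl⟩ := Submodule.Quotient.mk_surjective K x
    rw [Submodule.mapQ_apply]
    apply Subtype.ext
    have hval : ∀ y : V, ((e (Submodule.Quotient.mk y)) : W) = q y := fun y => by
      simp [e, Submodule.quotEquivOfEq_mk, LinearMap.quotKerEquivRange_apply_mk]
    calc ((g.restrict hgR) (e (Submodule.Quotient.mk x)) : W)
        = g (q x) := by rw [LinearMap.restrict_apply]; exact congrArg g (hval x)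
      _ = q (f x) := (hqf x).symm
      _ = ((e (Submodule.Quotient.mk (f x))) : W) := (hval (f x)).symm
  -- inside K : restrict to Rv and its quotient
  set fK : K →ₗ[ℂ] K := f.restrict (fun x hx => hfK' hx) with hfKdef
  have hinv : Rv.comap K.subtype ≤ (Rv.comap K.subtype).comap fK := by
    intro x hx
    exact hfR x.1 hx
  have t3 := trace_restrict_add_trace_mapQ (Rv.comap K.subtype) fK hinv
  have t4 : LinearMap.trace ℂ (Rv.comap K.subtype) (fK.restrict (fun x hx => hinv hx))
      = LinearMap.trace ℂ Rv (f.restrict hfR) := by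
    refine trace_eq_of_equiv (Submodule.comapSubtypeEquivOfLe hRK) _ _ ?_
    intro x
    apply Subtype.ext
    rfl
  have t5 : LinearMap.trace ℂ _ ((Rv.comap K.subtype).mapQ (Rv.comap K.subtype) fK hinv)
      = LinearMap.trace ℂ _ τ := by
    congr 1
    apply LinearMap.ext
    intro x
    obtain ⟨x, rfl⟩ := Submodule.Quotient.mk_surjective _ x
    rw [Submodule.mapQ_apply, hτ x]
    rfl
  rw [t1, t2, t3, t4, t5]

end Hopf

/-!
STATEMENT 5 (McKean–Singer / Bott): For a cochain complex of finite-dimensional complex inner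
product spaces with Laplacians `Δ_j`, and a chain endomorphism `T` commuting with each `Δ_j`,
for every `t > 0` the Lefschetz number satisfies
`L(T) = Σ (−1)^j tr(T_j ∘ exp(−t Δ_j))`.

Paper degree `j` corresponds to index `j + 1`; degrees `0` and `N + 2` are zero.
`𝒯 j` is the map induced by `T` on the cohomology `H^j = ker P (j+1) / im P j`.
-/

theorem stmt5 (N : ℕ) (C : ℕ → Type)
    [∀ j, NormedAddCommGroup (C j)] [∀ j, InnerProductSpace ℂ (C j)]
    [∀ j, FiniteDimensional ℂ (C j)]
    (P : ∀ j : ℕ, C j →L[ℂ] C (j + 1))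
    (hC0 : ∀ x : C 0, x = 0)
    (hCtop : ∀ x : C (N + 2), x = 0)
    (hPP : ∀ (j : ℕ) (x : C j), P (j + 1) (P j x) = 0)
    (Δ : ∀ j : ℕ, C (j + 1) →L[ℂ] C (j + 1))
    (hΔ : ∀ j : ℕ, Δ j = (P j).comp (ContinuousLinearMap.adjoint (P j))
        + (ContinuousLinearMap.adjoint (P (j + 1))).comp (P (j + 1)))
    (T : ∀ j : ℕ, C j →L[ℂ] C j)
    (hT : ∀ (j : ℕ) (x : C j), P j (T j x) = T (j + 1) (P j x))
    (hTΔ : ∀ j : ℕ, (T (j + 1)).comp (Δ j) = (Δ j).comp (T (j + 1)))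
    (𝒯 : ∀ j : ℕ, (LinearMap.ker (P (j + 1)).toLinearMap ⧸
            (LinearMap.range (P j).toLinearMap).comap (LinearMap.ker (P (j + 1)).toLinearMap).subtype) →ₗ[ℂ]
          (LinearMap.ker (P (j + 1)).toLinearMap ⧸
            (LinearMap.range (P j).toLinearMap).comap (LinearMap.ker (P (j + 1)).toLinearMap).subtype))
    (h𝒯 : ∀ (j : ℕ) (x : C (j + 1)) (hx : x ∈ LinearMap.ker (P (j + 1)).toLinearMap)
        (hx' : T (j + 1) x ∈ LinearMap.ker (P (j + 1)).toLinearMap),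
      𝒯 j (Submodule.Quotient.mk ⟨x, hx⟩) = Submodule.Quotient.mk ⟨T (j + 1) x, hx'⟩) :
    ∀ t : ℝ, 0 < t →
      ∑ j ∈ Finset.range (N + 1), (-1 : ℂ) ^ j * LinearMap.trace ℂ _ (𝒯 j)
        = ∑ j ∈ Finset.range (N + 1), (-1 : ℂ) ^ j *
            LinearMap.trace ℂ (C (j + 1))
              (((T (j + 1)).comp (NormedSpace.exp (-(t : ℂ) • Δ j))).toLinearMap) := by
  intro t ht
  -- notation
  set A : ∀ j : ℕ, C (j + 1) →L[ℂ] C (j + 1) := fun j => -(t : ℂ) • Δ j with hA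
  -- the Laplacian intertwines with P
  have hPΔ : ∀ j : ℕ, (P (j + 1)).comp (Δ j) = (Δ (j + 1)).comp (P (j + 1)) := by
    intro j
    ext x
    simp only [ContinuousLinearMap.comp_apply, hΔ, ContinuousLinearMap.add_apply]
    rw [map_add, hPP j, zero_add, hPP (j + 1), map_zero, add_zero]
  have hPA : ∀ j : ℕ, (P (j + 1)).comp (A j) = (A (j + 1)).comp (P (j + 1)) := by
    intro j
    simp only [hA, ContinuousLinearMap.comp_smul, ContinuousLinearMap.smul_comp, hPΔ j]
  have hPE : ∀ (j : ℕ) (x : C (j + 1)),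
      P (j + 1) (NormedSpace.exp (A j) x) = NormedSpace.exp (A (j + 1)) (P (j + 1) x) := by
    intro j x
    have := exp_intertwine (P (j + 1)) (A j) (A (j + 1)) (hPA j)
    exact ContinuousLinearMap.ext_iff.mp this x
  -- the full heat endomorphism and its chain property
  have hFP : ∀ (j : ℕ) (x : C (j + 1)),
      P (j + 1) ((T (j + 1)).comp (NormedSpace.exp (A j)) x)
        = (T (j + 2)).comp (NormedSpace.exp (A (j + 1))) (P (j + 1) x) := by
    intro j x
    simp only [ContinuousLinearMap.comp_apply]
    rw [← hPE j]
    exact hT (j + 1) (NormedSpace.exp (A j) x)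
  -- invariance of the space of coboundaries
  have hΔR : ∀ (j : ℕ), ∀ y ∈ LinearMap.range (P j).toLinearMap, Δ j y ∈ LinearMap.range (P j).toLinearMap := by
    rintro j y ⟨u, rfl⟩
    have hstep : Δ j (P j u) = P j (ContinuousLinearMap.adjoint (P j) (P j u))
        + ContinuousLinearMap.adjoint (P (j + 1)) (P (j + 1) (P j u)) := by
      rw [hΔ j]; rfl
    rw [ContinuousLinearMap.coe_coe, hstep, hPP j, map_zero, add_zero]
    exact ⟨_, rfl⟩
  have hAR : ∀ (j : ℕ), ∀ y ∈ LinearMap.range (P j).toLinearMap, A j y ∈ LinearMap.range (P j).toLinearMap := by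
    intro j y hy
    exact Submodule.smul_mem _ _ (hΔR j y hy)
  have hER : ∀ (j : ℕ), ∀ y ∈ LinearMap.range (P j).toLinearMap,
      NormedSpace.exp (A j) y ∈ LinearMap.range (P j).toLinearMap :=
    fun j y hy => exp_mem_of_invariant (A j) _ (hAR j) hy
  have hTR : ∀ (j : ℕ), ∀ y ∈ LinearMap.range (P j).toLinearMap,
      T (j + 1) y ∈ LinearMap.range (P j).toLinearMap := by
    rintro j y ⟨u, rfl⟩
    exact ⟨T j u, hT j u⟩
  have hFR : ∀ (j : ℕ), ∀ y ∈ LinearMap.range (P j).toLinearMap,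
      ((T (j + 1)).comp (NormedSpace.exp (A j))).toLinearMap y ∈ LinearMap.range (P j).toLinearMap :=
    fun j y hy => hTR j _ (hER j y hy)
  -- key : exp differs from the identity by a coboundary on cocycles
  have hkey : ∀ (j : ℕ), ∀ x ∈ LinearMap.ker (P (j + 1)).toLinearMap,
      NormedSpace.exp (A j) x - x ∈ LinearMap.range (P j).toLinearMap := by
    intro j x hx
    refine exp_sub_self_mem (A j) _ (hAR j) ?_
    refine Submodule.smul_mem _ _ ?_
    show Δ j x ∈ LinearMap.range (P j).toLinearMap
    have hstep : Δ j x = P j (ContinuousLinearMap.adjoint (P j) x)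
        + ContinuousLinearMap.adjoint (P (j + 1)) (P (j + 1) x) := by
      rw [hΔ j]; rfl
    rw [hstep, (by exact LinearMap.mem_ker.mp hx : P (j + 1) x = 0), map_zero, add_zero]
    exact ⟨_, rfl⟩
  -- invariance of cocycles
  have hTK : ∀ (j : ℕ), ∀ x ∈ LinearMap.ker (P (j + 1)).toLinearMap,
      T (j + 1) x ∈ LinearMap.ker (P (j + 1)).toLinearMap := by
    intro j x hx
    rw [LinearMap.mem_ker, ContinuousLinearMap.coe_coe, hT (j + 1), (by exact LinearMap.mem_ker.mp hx : P (j + 1) x = 0), map_zero]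
  have hFK : ∀ (j : ℕ), ∀ x ∈ LinearMap.ker (P (j + 1)).toLinearMap,
      ((T (j + 1)).comp (NormedSpace.exp (A j))).toLinearMap x
        ∈ LinearMap.ker (P (j + 1)).toLinearMap := by
    intro j x hx
    rw [LinearMap.mem_ker]
    show P (j + 1) ((T (j + 1)).comp (NormedSpace.exp (A j)) x) = 0
    rw [hFP j x, (by exact LinearMap.mem_ker.mp hx : P (j + 1) x = 0), map_zero]
  -- the boundary traces
  set s : ℕ → ℂ := fun j => LinearMap.trace ℂ (LinearMap.range (P j).toLinearMap)
    ((((T (j + 1)).comp (NormedSpace.exp (A j))).toLinearMap).restrict (hFR j)) with hs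
  -- per-degree Hopf identity
  have hper : ∀ j : ℕ,
      LinearMap.trace ℂ (C (j + 1)) (((T (j + 1)).comp (NormedSpace.exp (A j))).toLinearMap)
        = s j + LinearMap.trace ℂ _ (𝒯 j) + s (j + 1) := by
    intro j
    refine hopf_step ((P (j + 1)).toLinearMap) (LinearMap.ker (P (j + 1)).toLinearMap) rfl
      (LinearMap.range (P j).toLinearMap) ?_ (LinearMap.range (P (j + 1)).toLinearMap) rfl
      _ _ (hFP j) (hFR j) (hFR (j + 1)) (hFK j) (𝒯 j) ?_
    · rintro y ⟨u, rfl⟩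
      exact LinearMap.mem_ker.mpr (hPP j u)
    · intro x
      have hTx : T (j + 1) x.1 ∈ LinearMap.ker (P (j + 1)).toLinearMap := hTK j x.1 x.2
      have step1 : 𝒯 j (Submodule.Quotient.mk x) = Submodule.Quotient.mk ⟨T (j + 1) x.1, hTx⟩ :=
        h𝒯 j x.1 x.2 hTx
      rw [step1, Submodule.Quotient.eq]
      show (⟨T (j + 1) x.1, hTx⟩ - ⟨_, hFK j x.1 x.2⟩ : LinearMap.ker (P (j + 1)).toLinearMap).1
        ∈ LinearMap.range (P j).toLinearMap
      have hval : (⟨T (j + 1) x.1, hTx⟩ - ⟨_, hFK j x.1 x.2⟩ : LinearMap.ker (P (j + 1)).toLinearMap).1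
          = -(T (j + 1) (NormedSpace.exp (A j) x.1 - x.1)) := by
        show T (j + 1) x.1 - (T (j + 1)) (NormedSpace.exp (A j) x.1) = _
        rw [map_sub]
        abel
      rw [hval]
      exact Submodule.neg_mem _ (hTR j _ (hkey j x.1 x.2))
  -- endpoint traces vanish
  have hs0 : s 0 = 0 := by
    have hval : ∀ a : LinearMap.range (P 0).toLinearMap, (a : C 1) = 0 := by
      rintro ⟨a, u, rfl⟩
      show (P 0) u = 0
      rw [hC0 u, map_zero]
    have hsub : Subsingleton (LinearMap.range (P 0).toLinearMap) :=
      ⟨fun a b => Subtype.ext (by rw [hval a, hval b])⟩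
    have hzero : (((T 1).comp (NormedSpace.exp (A 0))).toLinearMap.restrict (hFR 0)) = 0 :=
      LinearMap.ext fun x => Subsingleton.elim _ _
    simp only [hs]
    rw [hzero, map_zero]
  have hstop : s (N + 1) = 0 := by
    have hval : ∀ a : LinearMap.range (P (N + 1)).toLinearMap, (a : C (N + 2)) = 0 := fun a => hCtop _
    have hsub : Subsingleton (LinearMap.range (P (N + 1)).toLinearMap) :=
      ⟨fun a b => Subtype.ext (by rw [hval a, hval b])⟩
    have hzero : (((T (N + 2)).comp (NormedSpace.exp (A (N + 1)))).toLinearMap.restrict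
        (hFR (N + 1))) = 0 :=
      LinearMap.ext fun x => Subsingleton.elim _ _
    simp only [hs]
    rw [hzero, map_zero]
  -- assemble the alternating sum
  symm
  calc ∑ j ∈ Finset.range (N + 1), (-1 : ℂ) ^ j *
          LinearMap.trace ℂ (C (j + 1))
            (((T (j + 1)).comp (NormedSpace.exp (-(t : ℂ) • Δ j))).toLinearMap)
      = ∑ j ∈ Finset.range (N + 1), ((-1 : ℂ) ^ j * LinearMap.trace ℂ _ (𝒯 j)
          + ((-1 : ℂ) ^ j * s j - (-1 : ℂ) ^ (j + 1) * s (j + 1))) := by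
        refine Finset.sum_congr rfl fun j _ => ?_
        rw [show ((-(t : ℂ)) • Δ j : C (j+1) →L[ℂ] C (j+1)) = A j from rfl, hper j]
        ring
    _ = ∑ j ∈ Finset.range (N + 1), (-1 : ℂ) ^ j * LinearMap.trace ℂ _ (𝒯 j)
          + ∑ j ∈ Finset.range (N + 1),
            ((-1 : ℂ) ^ j * s j - (-1 : ℂ) ^ (j + 1) * s (j + 1)) := Finset.sum_add_distrib
    _ = ∑ j ∈ Finset.range (N + 1), (-1 : ℂ) ^ j * LinearMap.trace ℂ _ (𝒯 j) := by
        rw [Finset.sum_range_sub' (fun j => (-1 : ℂ) ^ j * s j) (N + 1)]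
        rw [hs0, hstop]
        ring
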